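/- A value Φ on TU games satisfies efficiency, symmetry, and coalitional k-strategic equivalence if and only if Φ = Φ^{k-SED}. -/

import Mathlib

open Finset

/-- The Shapley value of player `i` in the TU game `v` on player set `Fin n`. -/
noncomputable def shapley (n : ℕ) (v : Finset (Fin n) → ℝ) (i : Fin n) : ℝ :=
  ∑ S ∈ (Finset.univ.erase i).powerset,
      ((S.card.factorial * (n - S.card - 1).factorial : ℝ) / n.factorial) *
        (v (insert i S) - v S)

/-- The `k`-SED value of player `i` in the TU game `v` on player set `Fin n`. -/
noncomputable def kSED (n k : ℕ) (v : Finset (Fin n) → ℝ) (i : Fin n) : ℝ :=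
  (∑ S ∈ ((Finset.univ.erase i).powerset.filter (fun S => S.card = k - 1)),
      (((n - k).factorial * (k - 1).factorial : ℝ) / n.factorial) * v (insert i S))
  + ∑ S ∈ ((Finset.univ.erase i).powerset.filter (fun S => k ≤ S.card)),
      (((n - S.card - 1).factorial * S.card.factorial : ℝ) / n.factorial) *
        (v (insert i S) - v S)


lemma sum_pm {α : Type*} [DecidableEq α] (s : Finset α) :
    ∑ t ∈ s.powerset, (-1 : ℝ) ^ t.card = if s = ∅ then 1 else 0 := by
  have h : ((∑ m ∈ s.powerset, (-1 : ℤ) ^ m.card : ℤ) : ℝ)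
      = ((if s = ∅ then 1 else 0 : ℤ) : ℝ) := by
    rw [Finset.sum_powerset_neg_one_pow_card]
  push_cast at h
  simpa using h

lemma sum_filter_supset {α : Type*} [DecidableEq α] (A B : Finset α) (hAB : A ⊆ B) :
    ∑ T ∈ B.powerset.filter (fun T => A ⊆ T), (-1 : ℝ) ^ (T.card - A.card)
      = if A = B then 1 else 0 := by
  have key : ∑ T ∈ B.powerset.filter (fun T => A ⊆ T), (-1 : ℝ) ^ (T.card - A.card)
      = ∑ U ∈ (B \ A).powerset, (-1 : ℝ) ^ U.card := by
    refine Finset.sum_nbij' (fun T => T \ A) (fun U => A ∪ U) ?_ ?_ ?_ ?_ ?_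
    · intro T hT
      simp only [mem_filter, mem_powerset] at hT ⊢
      exact sdiff_subset_sdiff hT.1 Subset.rfl
    · intro U hU
      simp only [mem_filter, mem_powerset] at hU ⊢
      exact ⟨union_subset hAB ((hU.trans (sdiff_subset))), subset_union_left⟩
    · intro T hT
      simp only [mem_filter, mem_powerset] at hT
      exact union_sdiff_of_subset hT.2
    · intro U hU
      simp only [mem_powerset] at hU
      exact union_sdiff_cancel_left (disjoint_sdiff.mono_right hU)
    · intro T hT
      simp only [mem_filter, mem_powerset] at hT
      rw [card_sdiff_of_subset hT.2]
  rw [key, sum_pm]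
  congr 1
  rw [sdiff_eq_empty_iff_subset]
  exact propext ⟨fun h => Subset.antisymm hAB h, fun h => h ▸ Subset.rfl⟩

lemma mobius {α : Type*} [DecidableEq α] (w : Finset α → ℝ) (S : Finset α) :
    ∑ T ∈ S.powerset, ∑ R ∈ T.powerset, (-1 : ℝ) ^ (T.card - R.card) * w R = w S := by
  have step1 : ∀ T ∈ S.powerset,
      ∑ R ∈ T.powerset, (-1 : ℝ) ^ (T.card - R.card) * w R
        = ∑ R ∈ S.powerset, if R ⊆ T then (-1 : ℝ) ^ (T.card - R.card) * w R else 0 := by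
    intro T hT
    rw [mem_powerset] at hT
    rw [show (∑ R ∈ T.powerset, (-1 : ℝ) ^ (T.card - R.card) * w R)
        = ∑ R ∈ T.powerset, (if R ⊆ T then (-1 : ℝ) ^ (T.card - R.card) * w R else 0) from
      Finset.sum_congr rfl fun R hR => (if_pos (mem_powerset.1 hR)).symm]
    exact Finset.sum_subset (powerset_mono.2 hT)
      (fun R _ hR => if_neg (fun h => hR (mem_powerset.2 h)))
  rw [Finset.sum_congr rfl step1, Finset.sum_comm]
  have step2 : ∀ R ∈ S.powerset,
      (∑ T ∈ S.powerset, if R ⊆ T then (-1 : ℝ) ^ (T.card - R.card) * w R else 0)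
        = (if R = S then 1 else 0) * w R := by
    intro R hR
    rw [mem_powerset] at hR
    rw [Finset.sum_ite, Finset.sum_const_zero, add_zero, ← Finset.sum_mul,
      sum_filter_supset R S hR]
  rw [Finset.sum_congr rfl step2]
  simp only [ite_mul, one_mul, zero_mul]
  simp [Finset.sum_ite_eq']

lemma shapley_eff (n : ℕ) (hn : 1 ≤ n) (v : Finset (Fin n) → ℝ) (hv : v ∅ = 0) :
    ∑ i, shapley n v i = v Finset.univ := by
  classical
  set q : ℕ → ℝ := fun s => (s.factorial * (n - s - 1).factorial : ℝ) / n.factorial with hq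
  have hform : ∀ i : Fin n, shapley n v i =
      ∑ R ∈ (Finset.univ : Finset (Fin n)).powerset,
        (if i ∈ R then q (R.card - 1) * v R else -(q R.card * v R)) := by
    intro i
    have hi : i ∉ Finset.univ.erase i := notMem_erase i _
    have hins : insert i (Finset.univ.erase i) = (Finset.univ : Finset (Fin n)) :=
      insert_erase (mem_univ i)
    rw [show ((Finset.univ : Finset (Fin n)).powerset)
        = (insert i (Finset.univ.erase i)).powerset from by rw [hins]]
    rw [Finset.sum_powerset_insert hi]
    have h1 : ∀ S ∈ (Finset.univ.erase i).powerset,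
        (if i ∈ S then q (S.card - 1) * v S else -(q S.card * v S)) = -(q S.card * v S) := by
      intro S hS
      rw [if_neg (fun h => hi (mem_powerset.1 hS h))]
    have h2 : ∀ S ∈ (Finset.univ.erase i).powerset,
        (if i ∈ insert i S then q ((insert i S).card - 1) * v (insert i S)
          else -(q (insert i S).card * v (insert i S)))
          = q S.card * v (insert i S) := by
      intro S hS
      have hiS : i ∉ S := fun h => hi (mem_powerset.1 hS h)
      rw [if_pos (mem_insert_self i S), card_insert_of_notMem hiS, Nat.add_sub_cancel]
    rw [Finset.sum_congr rfl h1, Finset.sum_congr rfl h2, shapley, ← Finset.sum_add_distrib]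
    refine Finset.sum_congr rfl fun S hS => ?_
    simp only [hq]
    ring
  rw [Finset.sum_congr rfl (fun i _ => hform i), Finset.sum_comm]
  have inner : ∀ R ∈ (Finset.univ : Finset (Fin n)).powerset,
      (∑ i : Fin n, (if i ∈ R then q (R.card - 1) * v R else -(q R.card * v R)))
        = ((R.card : ℝ) * q (R.card - 1) - ((n - R.card : ℕ) : ℝ) * q R.card) * v R := by
    intro R _
    rw [Finset.sum_ite, Finset.sum_const, Finset.sum_const]
    have e1 : (Finset.univ.filter (fun i => i ∈ R)).card = R.card := by
      rw [Finset.filter_mem_eq_inter, Finset.univ_inter]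
    have e2 : (Finset.univ.filter (fun i => ¬ i ∈ R)).card = n - R.card := by
      rw [Finset.filter_not, Finset.filter_mem_eq_inter, Finset.univ_inter,
        Finset.card_sdiff_of_subset (subset_univ R), Finset.card_univ, Fintype.card_fin]
    rw [e1, e2, nsmul_eq_mul, nsmul_eq_mul]
    ring
  rw [Finset.sum_congr rfl inner]
  rw [Finset.sum_eq_single Finset.univ]
  · rw [Finset.card_univ, Fintype.card_fin, Nat.sub_self, Nat.cast_zero, zero_mul, sub_zero]
    have h0 : n - (n - 1) - 1 = 0 := by omega
    have hnf : (n.factorial : ℝ) = (n : ℝ) * (n - 1).factorial := by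
      obtain ⟨m, rfl⟩ : ∃ m, n = m + 1 := ⟨n - 1, by omega⟩
      simp only [Nat.add_sub_cancel, Nat.factorial_succ]
      push_cast; ring
    have hc : (n : ℝ) * q (n - 1) = 1 := by
      simp only [hq, h0, Nat.factorial_zero, Nat.cast_one, mul_one]
      rw [hnf]
      have h1 : ((n - 1).factorial : ℝ) ≠ 0 := Nat.cast_ne_zero.mpr (Nat.factorial_ne_zero _)
      have h2 : (n : ℝ) ≠ 0 := Nat.cast_ne_zero.mpr (by omega)
      field_simp
    rw [hc, one_mul]
  · intro R hR hRu
    rcases eq_or_ne R ∅ with h | h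
    · rw [h, hv, mul_zero]
    · have hr1 : 1 ≤ R.card := Finset.card_pos.2 (Finset.nonempty_iff_ne_empty.2 h)
      have hrn : R.card < n := by
        have hle : R.card ≤ n := by
          simpa [Finset.card_univ, Fintype.card_fin] using Finset.card_le_univ R
        rcases lt_or_eq_of_le hle with h' | h'
        · exact h'
        · exact absurd (Finset.eq_univ_of_card R (by simpa [Fintype.card_fin] using h')) hRu
      have key : (R.card : ℝ) * q (R.card - 1) - ((n - R.card : ℕ) : ℝ) * q R.card = 0 := by
        set r := R.card with hr
        have h3 : n - (r - 1) - 1 = n - r := by omega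
        have f1 : (r : ℝ) * (r - 1).factorial = r.factorial := by
          obtain ⟨t, ht⟩ : ∃ t, r = t + 1 := ⟨r - 1, by omega⟩
          rw [ht]
          simp only [Nat.add_sub_cancel, Nat.factorial_succ]
          push_cast; ring
        have f2 : ((n - r : ℕ) : ℝ) * (n - r - 1).factorial = (n - r).factorial := by
          obtain ⟨t, ht⟩ : ∃ t, n - r = t + 1 := ⟨n - r - 1, by omega⟩
          rw [ht]
          simp only [Nat.add_sub_cancel, Nat.factorial_succ]
          push_cast; ring
        simp only [hq, h3]
        linear_combination (((n - r).factorial : ℝ) / n.factorial) * f1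
          - ((r.factorial : ℝ) / n.factorial) * f2
      rw [key, zero_mul]
  · intro h
    exact absurd (Finset.mem_powerset_self _) h

lemma shapley_symm (n : ℕ) (v : Finset (Fin n) → ℝ) (i j : Fin n)
    (h : ∀ S ∈ (Finset.univ \ {i, j} : Finset (Fin n)).powerset,
      v (insert i S) = v (insert j S)) :
    shapley n v i = shapley n v j := by
  rcases eq_or_ne i j with rfl | hij
  · rfl
  have hji := hij.symm
  set D : Finset (Fin n) := Finset.univ \ {i, j} with hD
  have hiD : i ∉ D := by simp [hD]
  have hjD : j ∉ D := by simp [hD]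
  have hEi : Finset.univ.erase i = insert j D := by
    ext x
    simp only [hD, Finset.mem_erase, Finset.mem_insert, Finset.mem_sdiff, Finset.mem_univ,
      true_and, and_true, Finset.mem_singleton]
    constructor
    · intro hx
      rcases eq_or_ne x j with rfl | hxj
      · exact Or.inl rfl
      · exact Or.inr (not_or_intro hx hxj)
    · rintro (rfl | hx)
      · exact hji
      · exact fun hxi => hx (Or.inl hxi)
  have hEj : Finset.univ.erase j = insert i D := by
    ext x
    simp only [hD, Finset.mem_erase, Finset.mem_insert, Finset.mem_sdiff, Finset.mem_univ,
      true_and, and_true, Finset.mem_singleton]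
    constructor
    · intro hx
      rcases eq_or_ne x i with rfl | hxj
      · exact Or.inl rfl
      · exact Or.inr (not_or_intro hxj hx)
    · rintro (rfl | hx)
      · exact hij
      · exact fun hxi => hx (Or.inr hxi)
  rw [shapley, shapley, hEi, hEj, Finset.sum_powerset_insert hjD, Finset.sum_powerset_insert hiD]
  congr 1
  · refine Finset.sum_congr rfl fun S hS => ?_
    rw [h S hS]
  · refine Finset.sum_congr rfl fun S hS => ?_
    have hiS : i ∉ S := fun hx => hiD (mem_powerset.1 hS hx)
    have hjS : j ∉ S := fun hx => hjD (mem_powerset.1 hS hx)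
    rw [card_insert_of_notMem hiS, card_insert_of_notMem hjS, Finset.insert_comm,
      h S hS]

lemma kSED_eq_shapley (n k : ℕ) (hk : 1 ≤ k) (v : Finset (Fin n) → ℝ) (i : Fin n) :
    kSED n k v i = shapley n (fun S => if k ≤ S.card then v S else 0) i := by
  rw [shapley, kSED,
    ← Finset.sum_filter_add_sum_filter_not ((Finset.univ.erase i).powerset)
      (fun S => k ≤ S.card)]
  have e2 : ∑ S ∈ (Finset.univ.erase i).powerset.filter (fun S => k ≤ S.card),
      ((S.card.factorial * (n - S.card - 1).factorial : ℝ) / n.factorial) *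
        ((if k ≤ (insert i S).card then v (insert i S) else 0) - (if k ≤ S.card then v S else 0))
      = ∑ S ∈ (Finset.univ.erase i).powerset.filter (fun S => k ≤ S.card),
      (((n - S.card - 1).factorial * S.card.factorial : ℝ) / n.factorial) *
        (v (insert i S) - v S) := by
    refine Finset.sum_congr rfl fun S hS => ?_
    obtain ⟨hS, hcard⟩ := Finset.mem_filter.1 hS
    have hiS : i ∉ S := fun hx => (notMem_erase i _) (mem_powerset.1 hS hx)
    rw [if_pos hcard, if_pos (by rw [card_insert_of_notMem hiS]; omega)]
    ring
  have e1 : ∑ S ∈ (Finset.univ.erase i).powerset.filter (fun S => ¬ k ≤ S.card),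
      ((S.card.factorial * (n - S.card - 1).factorial : ℝ) / n.factorial) *
        ((if k ≤ (insert i S).card then v (insert i S) else 0) - (if k ≤ S.card then v S else 0))
      = ∑ S ∈ (Finset.univ.erase i).powerset.filter (fun S => S.card = k - 1),
      (((n - k).factorial * (k - 1).factorial : ℝ) / n.factorial) * v (insert i S) := by
    have hsub : (Finset.univ.erase i).powerset.filter (fun S => S.card = k - 1)
        ⊆ (Finset.univ.erase i).powerset.filter (fun S => ¬ k ≤ S.card) := by
      intro S hS
      obtain ⟨h1, h2⟩ := Finset.mem_filter.1 hS
      exact Finset.mem_filter.2 ⟨h1, by omega⟩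
    rw [← Finset.sum_subset hsub]
    · refine Finset.sum_congr rfl fun S hS => ?_
      obtain ⟨hS, hcard⟩ := Finset.mem_filter.1 hS
      have hiS : i ∉ S := fun hx => (notMem_erase i _) (mem_powerset.1 hS hx)
      rw [card_insert_of_notMem hiS, if_pos (show k ≤ S.card + 1 by omega),
        if_neg (show ¬ k ≤ S.card by omega), hcard,
        show n - (k - 1) - 1 = n - k from by omega]
      ring
    · intro S hS hS'
      obtain ⟨hSp, hcard⟩ := Finset.mem_filter.1 hS
      have hne : S.card ≠ k - 1 := fun hc => hS' (Finset.mem_filter.2 ⟨hSp, hc⟩)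
      have hiS : i ∉ S := fun hx => (notMem_erase i _) (mem_powerset.1 hSp hx)
      rw [card_insert_of_notMem hiS, if_neg (show ¬ k ≤ S.card + 1 by omega),
        if_neg (show ¬ k ≤ S.card by omega)]
      ring
  rw [e1, e2, add_comm]

lemma kSED_eff (n k : ℕ) (hn : 1 ≤ n) (hk : 1 ≤ k) (hkn : k ≤ n) (v : Finset (Fin n) → ℝ)
    (hv : v ∅ = 0) : ∑ i, kSED n k v i = v Finset.univ := by
  rw [Finset.sum_congr rfl (fun i _ => kSED_eq_shapley n k hk v i)]
  have h0 : (fun S : Finset (Fin n) => if k ≤ S.card then v S else 0) ∅ = 0 := by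
    simp only [Finset.card_empty]
    exact if_neg (show ¬ k ≤ 0 by omega)
  rw [shapley_eff n hn _ h0]
  simp [Finset.card_univ, hkn]

lemma kSED_symm (n k : ℕ) (hk : 1 ≤ k) (v : Finset (Fin n) → ℝ) (i j : Fin n)
    (h : ∀ S ∈ (Finset.univ \ {i, j} : Finset (Fin n)).powerset,
      v (insert i S) = v (insert j S)) :
    kSED n k v i = kSED n k v j := by
  rw [kSED_eq_shapley n k hk, kSED_eq_shapley n k hk]
  refine shapley_symm n _ i j fun S hS => ?_
  have hiS : i ∉ S := by
    intro hx
    have := mem_powerset.1 hS hx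
    simp at this
  have hjS : j ∉ S := by
    intro hx
    have := mem_powerset.1 hS hx
    simp at this

  rw [card_insert_of_notMem hiS, card_insert_of_notMem hjS, h S hS]

lemma kSED_cse (n k : ℕ) (hk : 1 ≤ k) (v w : Finset (Fin n) → ℝ) (i : Fin n)
    (h1 : ∀ S ∈ (Finset.univ.erase i).powerset, S.card < k → w (insert i S) = 0)
    (h2 : ∀ S ∈ (Finset.univ.erase i).powerset, k ≤ S.card → w (insert i S) = w S) :
    kSED n k (v + w) i = kSED n k v i := by
  rw [kSED, kSED]
  congr 1
  · refine Finset.sum_congr rfl fun S hS => ?_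
    obtain ⟨hSp, hcard⟩ := Finset.mem_filter.1 hS
    rw [Pi.add_apply, h1 S hSp (by omega)]
    ring
  · refine Finset.sum_congr rfl fun S hS => ?_
    obtain ⟨hSp, hcard⟩ := Finset.mem_filter.1 hS
    rw [Pi.add_apply, Pi.add_apply, h2 S hSp hcard]
    ring

noncomputable def coefG (n k : ℕ) (v : Finset (Fin n) → ℝ) (T : Finset (Fin n)) : ℝ :=
  if T.card < k then v T
  else ∑ R ∈ T.powerset, (-1 : ℝ) ^ (T.card - R.card) * (if k ≤ R.card then v R else 0)

noncomputable def bgame (n k : ℕ) (T : Finset (Fin n)) : Finset (Fin n) → ℝ :=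
  fun S => if T.card < k then (if S = T then 1 else 0) else (if T ⊆ S then 1 else 0)

lemma coefG_linear (n k : ℕ) (v u : Finset (Fin n) → ℝ) (c : ℝ) (T : Finset (Fin n)) :
    coefG n k (fun S => v S + c * u S) T = coefG n k v T + c * coefG n k u T := by
  unfold coefG
  split_ifs with h
  · rfl
  · rw [Finset.mul_sum, ← Finset.sum_add_distrib]
    refine Finset.sum_congr rfl fun R _ => ?_
    split_ifs <;> ring

lemma recon (n k : ℕ) (hk : 1 ≤ k) (v : Finset (Fin n) → ℝ) (S : Finset (Fin n)) :
    v S = ∑ T ∈ (Finset.univ : Finset (Finset (Fin n))), coefG n k v T * bgame n k T S := by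
  have term : ∀ T : Finset (Fin n), coefG n k v T * bgame n k T S
      = if T.card < k then v T * (if S = T then 1 else 0)
        else (∑ R ∈ T.powerset, (-1 : ℝ) ^ (T.card - R.card) * (if k ≤ R.card then v R else 0))
          * (if T ⊆ S then 1 else 0) := by
    intro T
    unfold coefG bgame
    split_ifs <;> rfl
  rw [Finset.sum_congr rfl fun T _ => term T]
  rw [Finset.sum_ite]
  have A : ∑ T ∈ Finset.univ.filter (fun T : Finset (Fin n) => T.card < k),
      v T * (if S = T then 1 else 0) = if S.card < k then v S else 0 := by
    rcases lt_or_ge S.card k with h | h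
    · rw [if_pos h, Finset.sum_eq_single S]
      · rw [if_pos rfl, mul_one]
      · intro T _ hne
        rw [if_neg (fun e => hne e.symm), mul_zero]
      · intro hS
        exact absurd (Finset.mem_filter.2 ⟨mem_univ S, h⟩) hS
    · rw [if_neg (not_lt.2 h)]
      refine Finset.sum_eq_zero fun T hT => ?_
      have hT' : T.card < k := (Finset.mem_filter.1 hT).2
      rw [if_neg (fun e => by rw [e] at h; omega), mul_zero]
  have B : ∑ T ∈ Finset.univ.filter (fun T : Finset (Fin n) => ¬ T.card < k),
      (∑ R ∈ T.powerset, (-1 : ℝ) ^ (T.card - R.card) * (if k ≤ R.card then v R else 0))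
        * (if T ⊆ S then 1 else 0) = if k ≤ S.card then v S else 0 := by
    have e0 : ∀ T ∈ Finset.univ.filter (fun T : Finset (Fin n) => ¬ T.card < k),
        (∑ R ∈ T.powerset, (-1 : ℝ) ^ (T.card - R.card) * (if k ≤ R.card then v R else 0))
          * (if T ⊆ S then 1 else 0)
        = if T ⊆ S then
            (∑ R ∈ T.powerset, (-1 : ℝ) ^ (T.card - R.card) * (if k ≤ R.card then v R else 0))
          else 0 := by
      intro T _
      split_ifs <;> ring
    rw [Finset.sum_congr rfl e0, Finset.sum_filter]
    have e1 : ∀ T ∈ (Finset.univ : Finset (Finset (Fin n))),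
        (if ¬ T.card < k then (if T ⊆ S then
            (∑ R ∈ T.powerset, (-1 : ℝ) ^ (T.card - R.card) * (if k ≤ R.card then v R else 0))
          else 0) else 0)
        = if T ⊆ S then
            (∑ R ∈ T.powerset, (-1 : ℝ) ^ (T.card - R.card) * (if k ≤ R.card then v R else 0))
          else 0 := by
      intro T _
      by_cases h1 : T.card < k
      · rw [if_neg (not_not_intro h1)]
        by_cases h2 : T ⊆ S
        · rw [if_pos h2]
          refine (Finset.sum_eq_zero fun R hR => ?_).symm
          have hle : R.card ≤ T.card := Finset.card_le_card (Finset.mem_powerset.1 hR)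
          rw [if_neg (show ¬ k ≤ R.card by omega), mul_zero]
        · rw [if_neg h2]
      · rw [if_pos h1]
    rw [Finset.sum_congr rfl e1, ← Finset.sum_filter]
    have e2 : Finset.univ.filter (fun T : Finset (Fin n) => T ⊆ S) = S.powerset := by
      ext T
      simp [Finset.mem_powerset]
    rw [e2, mobius (fun R => if k ≤ R.card then v R else 0) S]
  rw [A, B]
  split_ifs <;> simp <;> omega

lemma coefG_bgame (n k : ℕ) (T T' : Finset (Fin n)) :
    coefG n k (bgame n k T) T' = if T' = T then 1 else 0 := by
  unfold coefG bgame
  by_cases h1 : T'.card < k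
  · rw [if_pos h1]
    by_cases h2 : T.card < k
    · rw [if_pos h2]
    · rw [if_neg h2]
      rw [if_neg (fun hsub : T ⊆ T' => by
        have := Finset.card_le_card hsub; omega)]
      rw [if_neg (fun e : T' = T => by rw [e] at h1; omega)]
  · rw [if_neg h1]
    by_cases h2 : T.card < k
    · simp only [if_pos h2]
      rw [Finset.sum_eq_zero, eq_comm]
      · rw [if_neg (fun e : T' = T => by rw [e] at h1; omega)]
      · intro R hR
        by_cases h3 : k ≤ R.card
        · rw [if_pos h3, if_neg (fun e : R = T => by rw [e] at h3; omega), mul_zero]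
        · rw [if_neg h3, mul_zero]
    · simp only [if_neg h2]
      have e1 : ∀ R ∈ T'.powerset,
          (-1 : ℝ) ^ (T'.card - R.card) * (if k ≤ R.card then (if T ⊆ R then (1:ℝ) else 0) else 0)
          = if T ⊆ R then (-1 : ℝ) ^ (T'.card - R.card) else 0 := by
        intro R _
        by_cases h3 : T ⊆ R
        · have : k ≤ R.card := le_trans (by omega) (Finset.card_le_card h3)
          rw [if_pos h3, if_pos this, if_pos h3, mul_one]
        · rw [if_neg h3]
          by_cases h4 : k ≤ R.card
          · rw [if_neg h3, if_pos h4, mul_zero]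
          · rw [if_neg h3, if_neg h4, mul_zero]
      rw [Finset.sum_congr rfl e1, ← Finset.sum_filter]
      by_cases h5 : T ⊆ T'
      · have e2 : ∀ R ∈ T'.powerset.filter (fun R => T ⊆ R),
            (-1 : ℝ) ^ (T'.card - R.card)
            = (-1 : ℝ) ^ (T'.card - T.card) * (-1 : ℝ) ^ (R.card - T.card) := by
          intro R hR
          obtain ⟨hRp, hTR⟩ := Finset.mem_filter.1 hR
          have hc1 : T.card ≤ R.card := Finset.card_le_card hTR
          have hc2 : R.card ≤ T'.card := Finset.card_le_card (Finset.mem_powerset.1 hRp)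
          rw [← pow_add, show (T'.card - T.card) + (R.card - T.card)
            = (T'.card - R.card) + 2 * (R.card - T.card) from by omega,
            pow_add, pow_mul]
          norm_num
        rw [Finset.sum_congr rfl e2, ← Finset.mul_sum, sum_filter_supset T T' h5]
        by_cases h6 : T = T'
        · rw [if_pos h6, if_pos h6.symm, h6, Nat.sub_self, pow_zero, mul_one]
        · rw [if_neg h6, if_neg (fun e => h6 e.symm), mul_zero]
      · rw [Finset.sum_eq_zero, eq_comm]
        · rw [if_neg (fun e : T' = T => h5 (e ▸ Finset.Subset.refl T'))]
        · intro R hR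
          obtain ⟨hRp, hTR⟩ := Finset.mem_filter.1 hR
          exact absurd (hTR.trans (Finset.mem_powerset.1 hRp)) h5

lemma bgame_empty (n k : ℕ) (T : Finset (Fin n)) (hT : T ≠ ∅) : bgame n k T ∅ = 0 := by
  unfold bgame
  split_ifs with h1 h2
  · exact absurd h2.symm hT
  · rfl
  · exact absurd (Finset.subset_empty.1 ‹T ⊆ ∅›) hT
  · rfl

lemma bgame_null_small (n k : ℕ) (T : Finset (Fin n)) (i : Fin n) (hiT : i ∉ T)
    (S : Finset (Fin n)) (hS : S.card < k) : bgame n k T (insert i S) = 0 := by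
  unfold bgame
  split_ifs with h1 h2
  · exact absurd (h2 ▸ Finset.mem_insert_self i S) hiT
  · rfl
  · rename_i h3
    have hTS : T ⊆ S := (Finset.subset_insert_iff_of_notMem hiT).1 h3
    have := Finset.card_le_card hTS
    omega
  · rfl

lemma bgame_null_big (n k : ℕ) (T : Finset (Fin n)) (i : Fin n) (hiT : i ∉ T)
    (S : Finset (Fin n)) (hS : k ≤ S.card) : bgame n k T (insert i S) = bgame n k T S := by
  unfold bgame
  by_cases h1 : T.card < k
  · rw [if_pos h1, if_pos h1,
      if_neg (fun e : insert i S = T => absurd (e ▸ Finset.mem_insert_self i S) hiT),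
      if_neg (fun e : S = T => by rw [e] at hS; omega)]
  · rw [if_neg h1, if_neg h1]
    by_cases h2 : T ⊆ S
    · rw [if_pos h2, if_pos (h2.trans (Finset.subset_insert i S))]
    · rw [if_neg h2, if_neg (fun h => h2 ((Finset.subset_insert_iff_of_notMem hiT).1 h))]

lemma bgame_pair (n k : ℕ) (T : Finset (Fin n)) (i j : Fin n) (hjT : j ∈ T) (hij : j ≠ i)
    (S : Finset (Fin n)) (hjS : j ∉ S) : bgame n k T (insert i S) = 0 := by
  have hj : j ∉ insert i S := by
    rw [Finset.mem_insert]
    rintro (h | h)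
    · exact hij h
    · exact hjS h
  unfold bgame
  split_ifs with h1 h2
  · exact absurd (h2 ▸ hjT) hj
  · rfl
  · rename_i h3
    exact absurd (h3 hjT) hj
  · rfl

open Classical in
noncomputable def suppG (n k : ℕ) (v : Finset (Fin n) → ℝ) : Finset (Finset (Fin n)) :=
  Finset.univ.filter (fun T => T ≠ ∅ ∧ coefG n k v T ≠ 0)

lemma recon_supp (n k : ℕ) (hk : 1 ≤ k) (v : Finset (Fin n) → ℝ) (hv : v ∅ = 0)
    (S : Finset (Fin n)) :
    v S = ∑ T ∈ suppG n k v, coefG n k v T * bgame n k T S := by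
  rw [recon n k hk v S]
  refine (Finset.sum_subset (by unfold suppG; exact Finset.filter_subset _ _) ?_).symm
  intro T _ hT
  simp only [suppG, Finset.mem_filter, Finset.mem_univ, true_and, not_and, not_not] at hT
  rcases eq_or_ne T ∅ with rfl | hne
  · have hz : coefG n k v ∅ = 0 := by
      unfold coefG
      rw [if_pos (by rw [Finset.card_empty]; omega)]
      exact hv
    rw [hz, zero_mul]
  · rw [hT hne, zero_mul]

/-- a value satisfies efficiency, symmetry and coalitional
`k`-strategic equivalence iff it is the `k`-SED value. -/
theorem kSED_characterization_kCSE (n k : ℕ) (hn : 1 ≤ n) (hk : 1 ≤ k) (hkn : k ≤ n)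
    (Φ : (Finset (Fin n) → ℝ) → Fin n → ℝ) :
    ((∀ v : Finset (Fin n) → ℝ, v ∅ = 0 → ∑ i, Φ v i = v Finset.univ) ∧
     (∀ v : Finset (Fin n) → ℝ, v ∅ = 0 → ∀ i j : Fin n,
        (∀ S ∈ (Finset.univ \ {i, j} : Finset (Fin n)).powerset,
          v (insert i S) = v (insert j S)) → Φ v i = Φ v j) ∧
     (∀ v w : Finset (Fin n) → ℝ, v ∅ = 0 → w ∅ = 0 → ∀ i : Fin n,
        (∀ S ∈ (Finset.univ.erase i).powerset, S.card < k → w (insert i S) = 0) →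
        (∀ S ∈ (Finset.univ.erase i).powerset, k ≤ S.card → w (insert i S) = w S) →
        Φ (v + w) i = Φ v i))
    ↔ (∀ v : Finset (Fin n) → ℝ, v ∅ = 0 → ∀ i : Fin n, Φ v i = kSED n k v i) := by
  constructor
  · rintro ⟨heff, hsym, hcse⟩
    have badlemma : ∀ v : Finset (Fin n) → ℝ, v ∅ = 0 →
        (∀ i : Fin n, (∃ T ∈ suppG n k v, i ∉ T) → Φ v i = kSED n k v i) →
        ∀ i : Fin n, Φ v i = kSED n k v i := by
      intro v hv hgood i
      by_cases hbad : ∃ T ∈ suppG n k v, i ∉ T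
      · exact hgood i hbad
      push_neg at hbad
      set Bad := Finset.univ.filter (fun i' : Fin n => ∀ T ∈ suppG n k v, i' ∈ T) with hBadDef
      have hiBad : i ∈ Bad := Finset.mem_filter.2 ⟨Finset.mem_univ i, hbad⟩
      have hsymz : ∀ i' j' : Fin n, i' ∈ Bad → j' ∈ Bad →
          (∀ S ∈ ((Finset.univ \ {i', j'} : Finset (Fin n))).powerset,
            v (insert i' S) = v (insert j' S)) := by
        intro i' j' hi' hj' S hS
        rcases eq_or_ne i' j' with rfl | hne
        · rfl
        have hSsub := Finset.mem_powerset.1 hS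
        have hi'S : i' ∉ S := fun h => by
          have := hSsub h; simp at this
        have hj'S : j' ∉ S := fun h => by
          have := hSsub h; simp at this
        rw [recon_supp n k hk v hv (insert i' S), recon_supp n k hk v hv (insert j' S)]
        refine Finset.sum_congr rfl fun T hT => ?_
        have hi'T : i' ∈ T := (Finset.mem_filter.1 hi').2 T hT
        have hj'T : j' ∈ T := (Finset.mem_filter.1 hj').2 T hT
        rw [bgame_pair n k T i' j' hj'T hne.symm S hj'S,
          bgame_pair n k T j' i' hi'T hne S hi'S]
      have hsum : ∑ i', (Φ v i' - kSED n k v i') = 0 := by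
        rw [Finset.sum_sub_distrib, heff v hv, kSED_eff n k hn hk hkn v hv, sub_self]
      have hzero : ∀ j' ∈ Finset.univ, j' ∉ Bad → Φ v j' - kSED n k v j' = 0 := by
        intro j' _ hj'
        have hex : ∃ T ∈ suppG n k v, j' ∉ T := by
          by_contra hc
          push_neg at hc
          exact hj' (Finset.mem_filter.2 ⟨Finset.mem_univ _, hc⟩)
        rw [hgood j' hex, sub_self]
      have hsum2 : ∑ i' ∈ Bad, (Φ v i' - kSED n k v i') = 0 := by
        rw [← hsum]
        exact Finset.sum_subset (Finset.subset_univ Bad) hzero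
      have hconst : ∀ j' ∈ Bad, Φ v j' - kSED n k v j' = Φ v i - kSED n k v i := by
        intro j' hj'
        rw [hsym v hv j' i (hsymz j' i hj' hiBad), kSED_symm n k hk v j' i (hsymz j' i hj' hiBad)]
      rw [Finset.sum_congr rfl hconst, Finset.sum_const, nsmul_eq_mul] at hsum2
      have hcardne : (Bad.card : ℝ) ≠ 0 :=
        Nat.cast_ne_zero.2 (Finset.card_ne_zero_of_mem hiBad)
      rcases mul_eq_zero.1 hsum2 with h | h
      · exact absurd h hcardne
      · exact sub_eq_zero.1 h
    have key : ∀ m : ℕ, ∀ v : Finset (Fin n) → ℝ, v ∅ = 0 → (suppG n k v).card ≤ m →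
        ∀ i : Fin n, Φ v i = kSED n k v i := by
      intro m
      induction m with
      | zero =>
        intro v hv hcard
        refine badlemma v hv fun i hex => ?_
        obtain ⟨T, hT, -⟩ := hex
        rw [Finset.card_eq_zero.1 (Nat.le_zero.1 hcard)] at hT
        exact absurd hT (Finset.notMem_empty T)
      | succ m IH =>
        intro v hv hcard
        refine badlemma v hv fun i hex => ?_
        obtain ⟨T, hTsupp, hiT⟩ := hex
        set c := coefG n k v T with hc
        set w : Finset (Fin n) → ℝ := fun S => c * bgame n k T S with hw
        set v' : Finset (Fin n) → ℝ := fun S => v S - c * bgame n k T S with hv'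
        have hvw : v = v' + w := by
          funext S
          simp only [hv', hw, Pi.add_apply]
          ring
        have hTne : T ≠ ∅ := by
          have := (Finset.mem_filter.1 hTsupp).2.1
          exact this
        have hw0 : w ∅ = 0 := by
          simp only [hw]
          rw [bgame_empty n k T hTne, mul_zero]
        have hv'0 : v' ∅ = 0 := by
          simp only [hv']
          rw [bgame_empty n k T hTne, hv, mul_zero, sub_zero]
        have hn1 : ∀ S ∈ (Finset.univ.erase i).powerset, S.card < k → w (insert i S) = 0 := by
          intro S _ hSc
          simp only [hw]
          rw [bgame_null_small n k T i hiT S hSc, mul_zero]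
        have hn2 : ∀ S ∈ (Finset.univ.erase i).powerset, k ≤ S.card →
            w (insert i S) = w S := by
          intro S _ hSc
          simp only [hw]
          rw [bgame_null_big n k T i hiT S hSc]
        have hcoef : ∀ T', coefG n k v' T'
            = coefG n k v T' - c * (if T' = T then 1 else 0) := by
          intro T'
          have e : coefG n k v' T' = coefG n k (fun S => v S + (-c) * bgame n k T S) T' := by
            congr 1
            funext S
            simp only [hv']
            ring
          rw [e, coefG_linear n k v (bgame n k T) (-c) T', coefG_bgame n k T T']
          ring
        have hsupp' : suppG n k v' ⊆ (suppG n k v).erase T := by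
          intro T' hT'
          simp only [suppG, Finset.mem_filter, Finset.mem_univ, true_and] at hT'
          have hne' : T' ≠ T := by
            intro e
            apply hT'.2
            rw [e, hcoef T, if_pos rfl, mul_one, ← hc, sub_self]
          refine Finset.mem_erase.2 ⟨hne', ?_⟩
          simp only [suppG, Finset.mem_filter, Finset.mem_univ, true_and]
          refine ⟨hT'.1, fun hz => ?_⟩
          exact hT'.2 (by rw [hcoef T', if_neg hne', mul_zero, hz, sub_zero])
        have hcard' : (suppG n k v').card ≤ m := by
          have h1 := Finset.card_le_card hsupp'
          rw [Finset.card_erase_of_mem hTsupp] at h1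
          omega
        calc Φ v i = Φ (v' + w) i := by rw [← hvw]
          _ = Φ v' i := hcse v' w hv'0 hw0 i hn1 hn2
          _ = kSED n k v' i := IH v' hv'0 hcard' i
          _ = kSED n k (v' + w) i := (kSED_cse n k hk v' w i hn1 hn2).symm
          _ = kSED n k v i := by rw [← hvw]
    intro v hv i
    exact key (suppG n k v).card v hv le_rfl i
  · intro hΦ
    refine ⟨?_, ?_, ?_⟩
    · intro v hv
      rw [Finset.sum_congr rfl (fun i _ => hΦ v hv i)]
      exact kSED_eff n k hn hk hkn v hv
    · intro v hv i j hs
      rw [hΦ v hv i, hΦ v hv j]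
      exact kSED_symm n k hk v i j hs
    · intro v w hv hw i h1 h2
      rw [hΦ v hv i, hΦ (v + w) (by rw [Pi.add_apply, hv, hw, add_zero]) i]
      exact kSED_cse n k hk v w i h1 h2
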